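/- A 4×4 Hermitian matrix V satisfies all three conditions (i) V is positive semidefinite, (ii) the partial transpose V^PT is positive semidefinite, and (iii) U_θ V U_θ† = V for all θ ∈ ℝ, if and only if V has the following form: all off-diagonal entries of V vanish except possibly the ((0,0),(1,1)) and ((1,1),(0,0)) entries (i.e., the (1,4) and (4,1) entries in the ordered basis |00⟩,|01⟩,|10⟩,|11⟩), the diagonal entries α = V_{(0,0),(0,0)}, γ = V_{(0,1),(0,1)}, δ = V_{(1,0),(1,0)}, β = V_{(1,1),(1,1)} are nonnegative, and |V_{(0,0),(1,1)}| ≤ min{√(αβ), √(γδ)}. -/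

import Mathlib

open scoped Kronecker ComplexOrder
open Matrix

noncomputable section

/-- Partial transpose on the second tensor factor. -/
def ptransposeB {m k : Type*} (M : Matrix (m × k) (m × k) ℂ) : Matrix (m × k) (m × k) ℂ :=
  Matrix.of fun p q => M (p.1, q.2) (q.1, p.2)

/-- The diagonal two-qubit phase unitary `U_θ = diag(1, e^{iθ}, e^{-iθ}, 1)`. -/
def Utheta (θ : ℝ) : Matrix (Fin 2 × Fin 2) (Fin 2 × Fin 2) ℂ :=
  Matrix.diagonal fun p => Complex.exp (Complex.I * θ * (((p.2 : ℕ) : ℂ) - ((p.1 : ℕ) : ℂ)))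

section helpers
open ComplexConjugate

lemma star_single' {n : Type*} [DecidableEq n] (k : n) (x : ℂ) :
    star (Pi.single k x : n → ℂ) = Pi.single k (star x) := by
  funext l; by_cases h : l = k <;> simp [Pi.single_apply, h]

lemma quad_expand {n : Type*} [Fintype n] [DecidableEq n] (M : Matrix n n ℂ) (i j : n)
    (c d : ℂ) :
    star (Pi.single i c + Pi.single j d) ⬝ᵥ M *ᵥ (Pi.single i c + Pi.single j d)
      = conj c * M i i * c + conj c * (M i j) * d + conj d * (M j i) * c + conj d * M j j * d := by
  simp only [star_add, star_single', Matrix.mulVec_add, Matrix.mulVec_single,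
    dotProduct_add, add_dotProduct, single_dotProduct]
  simp [Pi.single_apply]
  ring

lemma diag_psd_nonneg {n : Type*} [Fintype n] [DecidableEq n] {M : Matrix n n ℂ}
    (hM : M.PosSemidef) (i : n) : 0 ≤ M i i := by
  have h := hM.dotProduct_mulVec_nonneg (Pi.single i 1)
  simpa [star_single', Matrix.mulVec_single, single_dotProduct] using h

lemma offdiag_sq_le {n : Type*} [Fintype n] [DecidableEq n] {M : Matrix n n ℂ}
    (hM : M.PosSemidef) (i j : n) (hij : i ≠ j) :
    Complex.normSq (M i j) ≤ (M i i).re * (M j j).re := by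
  set a := (M i i).re with ha_def
  set b := (M j j).re with hb_def
  set v := M i j with hv_def
  set nn := Complex.normSq v with hnn_def
  have ha : 0 ≤ a := (Complex.nonneg_iff.mp (diag_psd_nonneg hM i)).1
  have hb : 0 ≤ b := (Complex.nonneg_iff.mp (diag_psd_nonneg hM j)).1
  have hii : M i i = (a : ℂ) := by
    have := (Complex.nonneg_iff.mp (diag_psd_nonneg hM i)).2
    exact (Complex.ext (by simp [ha_def]) (by simp [← this])).symm
  have hjj : M j j = (b : ℂ) := by
    have := (Complex.nonneg_iff.mp (diag_psd_nonneg hM j)).2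
    exact (Complex.ext (by simp [hb_def]) (by simp [← this])).symm
  have hji : M j i = conj v := by
    rw [← hM.isHermitian.apply j i]; rfl
  have hvc : v * conj v = (nn : ℂ) := Complex.mul_conj v
  have key : ∀ t : ℝ, 0 ≤ a * (t * t) + (-2 * nn) * t + b * nn := by
    intro t
    have h := hM.dotProduct_mulVec_nonneg (Pi.single i (t : ℂ) + Pi.single j (-conj v))
    rw [quad_expand M i j] at h
    have heq : conj (t : ℂ) * M i i * (t : ℂ) + conj (t : ℂ) * M i j * (-conj v)
        + conj (-conj v) * M j i * (t : ℂ) + conj (-conj v) * M j j * (-conj v)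
        = ((a * (t * t) + (-2 * nn) * t + b * nn : ℝ) : ℂ) := by
      rw [hii, hjj, hji, ← hv_def]
      push_cast
      simp only [map_neg, Complex.conj_conj, Complex.conj_ofReal]
      linear_combination ((b : ℂ) - 2 * (t : ℂ)) * hvc
    rw [heq] at h
    exact Complex.zero_le_real.mp h
  have hdisc : discrim a (-2 * nn) (b * nn) ≤ 0 := discrim_le_zero key
  rw [discrim] at hdisc
  have hnn : 0 ≤ nn := Complex.normSq_nonneg v
  rcases hnn.eq_or_lt with h0 | hpos
  · rw [← h0]; positivity
  · nlinarith

lemma quad_final (α β γ δ : ℝ) (v : ℂ) (hα : 0 ≤ α) (hβ : 0 ≤ β) (hγ : 0 ≤ γ) (hδ : 0 ≤ δ)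
    (hv : Complex.normSq v ≤ α * β) (x00 x01 x10 x11 : ℂ) :
    0 ≤ conj x00 * ((α : ℂ) * x00 + v * x11) + conj x01 * ((γ : ℂ) * x01)
      + conj x10 * ((δ : ℂ) * x10) + conj x11 * (conj v * x00 + (β : ℂ) * x11) := by
  have hre : conj x00 * (v * x11) + conj x11 * (conj v * x00)
      = 2 * (((conj x00 * v * x11).re : ℝ) : ℂ) := by
    have h := Complex.add_conj (conj x00 * v * x11)
    push_cast at h
    rw [← h]
    simp only [_root_.map_mul, Complex.conj_conj]
    ring
  have hmc : ∀ z : ℂ, conj z * z = ((Complex.normSq z : ℝ) : ℂ) := fun z => by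
    rw [mul_comm]; exact Complex.mul_conj z
  have heq : conj x00 * ((α : ℂ) * x00 + v * x11) + conj x01 * ((γ : ℂ) * x01)
      + conj x10 * ((δ : ℂ) * x10) + conj x11 * (conj v * x00 + (β : ℂ) * x11)
      = ((α * Complex.normSq x00 + γ * Complex.normSq x01 + δ * Complex.normSq x10
          + β * Complex.normSq x11 + 2 * (conj x00 * v * x11).re : ℝ) : ℂ) := by
    push_cast
    linear_combination (α : ℂ) * hmc x00 + (γ : ℂ) * hmc x01 + (δ : ℂ) * hmc x10
      + (β : ℂ) * hmc x11 + hre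
  rw [heq]
  rw [Complex.zero_le_real]
  set X := ‖x00‖ with hXd
  set Y := ‖x11‖ with hYd
  have hX : 0 ≤ X := norm_nonneg _
  have hY : 0 ≤ Y := norm_nonneg _
  have hVa : 0 ≤ ‖v‖ := norm_nonneg _
  have h1 : Complex.normSq x00 = X ^ 2 := (Complex.sq_norm _).symm
  have h2 : Complex.normSq x11 = Y ^ 2 := (Complex.sq_norm _).symm
  have hrb : -(‖v‖ * X * Y) ≤ (conj x00 * v * x11).re := by
    have := neg_le_of_abs_le (Complex.abs_re_le_norm (conj x00 * v * x11))
    have habs : ‖conj x00 * v * x11‖ = ‖v‖ * X * Y := by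
      rw [norm_mul, norm_mul, Complex.norm_conj, ← hXd, ← hYd]; ring
    rw [habs] at this; linarith
  have hS : 2 * (‖v‖ * X * Y) ≤ α * X ^ 2 + β * Y ^ 2 := by
    have hT2 : (2 * (‖v‖ * X * Y)) ^ 2 ≤ (α * X ^ 2 + β * Y ^ 2) ^ 2 := by
      have hv2 : ‖v‖ ^ 2 ≤ α * β := by rw [Complex.sq_norm]; exact hv
      nlinarith [sq_nonneg (α * X ^ 2 - β * Y ^ 2), sq_nonneg (X * Y), mul_nonneg hX hY,
        sq_nonneg X, sq_nonneg Y,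
        mul_nonneg (mul_nonneg hα (sq_nonneg X)) (mul_nonneg hβ (sq_nonneg Y))]
    have hTnn : 0 ≤ 2 * (‖v‖ * X * Y) := by positivity
    have hSnn : 0 ≤ α * X ^ 2 + β * Y ^ 2 := by positivity
    nlinarith
  nlinarith [mul_nonneg hγ (Complex.normSq_nonneg x01), mul_nonneg hδ (Complex.normSq_nonneg x10)]

lemma conj_diag_apply {n : Type*} [Fintype n] [DecidableEq n] (f : n → ℂ)
    (V : Matrix n n ℂ) (p q : n) :
    (Matrix.diagonal f * V * (Matrix.diagonal f)ᴴ) p q = f p * V p q * conj (f q) := by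
  rw [Matrix.diagonal_conjTranspose, Matrix.mul_diagonal, Matrix.diagonal_mul]
  rfl

lemma elim_phase {c v : ℂ} (h : c * v = v) (hc : c ≠ 1) : v = 0 := by
  have h2 : (c - 1) * v = 0 := by linear_combination h
  rcases mul_eq_zero.mp h2 with h' | h'
  · exact absurd (sub_eq_zero.mp h') hc
  · exact h'

lemma exp_piI_half : Complex.exp (Complex.I * ((Real.pi : ℂ) / 2)) = Complex.I := by
  rw [mul_comm, Complex.exp_mul_I]
  rw [show ((Real.pi : ℂ) / 2) = ((Real.pi / 2 : ℝ) : ℂ) by push_cast; ring]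
  rw [← Complex.ofReal_cos, ← Complex.ofReal_sin]
  norm_num [Real.cos_pi_div_two, Real.sin_pi_div_two]

lemma hE (m n : Fin 2) :
    Complex.exp (Complex.I * ((Real.pi / 2 : ℝ) : ℂ) * (((m : ℕ) : ℂ) - ((n : ℕ) : ℂ)))
      = if m = n then 1 else if n = 0 then Complex.I else -Complex.I := by
  fin_cases m <;> fin_cases n <;> simp
  · rw [Complex.exp_neg, exp_piI_half, Complex.inv_I]
  · exact exp_piI_half

lemma conj_phase (θ : ℝ) (a b : ℕ) :
    conj (Complex.I * (θ : ℂ) * ((a : ℂ) - (b : ℂ)))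
      = -(Complex.I * (θ : ℂ) * ((a : ℂ) - (b : ℂ))) := by
  simp only [_root_.map_mul, map_sub, Complex.conj_I, Complex.conj_ofReal, Complex.conj_natCast]
  ring

lemma phase_cancel (u : ℂ) (hu : conj u = -u) (x : ℂ) :
    Complex.exp u * x * conj (Complex.exp u) = x := by
  rw [← Complex.exp_conj, hu]
  have h1 : Complex.exp u * Complex.exp (-u) = 1 := by
    rw [← Complex.exp_add, add_neg_cancel, Complex.exp_zero]
  linear_combination x * h1

end helpers

theorem stmt2 (V : Matrix (Fin 2 × Fin 2) (Fin 2 × Fin 2) ℂ) (hherm : V.IsHermitian) :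
    (V.PosSemidef ∧ (ptransposeB V).PosSemidef ∧
        (∀ θ : ℝ, Utheta θ * V * (Utheta θ)ᴴ = V)) ↔
      ((∀ p q : Fin 2 × Fin 2, p ≠ q →
          ¬(p = ((0 : Fin 2), (0 : Fin 2)) ∧ q = ((1 : Fin 2), (1 : Fin 2))) →
          ¬(p = ((1 : Fin 2), (1 : Fin 2)) ∧ q = ((0 : Fin 2), (0 : Fin 2))) →
          V p q = 0) ∧
        (∀ p : Fin 2 × Fin 2, 0 ≤ V p p) ∧
        ‖V ((0 : Fin 2), (0 : Fin 2)) ((1 : Fin 2), (1 : Fin 2))‖ ≤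
          min (Real.sqrt ((V ((0 : Fin 2), (0 : Fin 2)) ((0 : Fin 2), (0 : Fin 2))).re *
                  (V ((1 : Fin 2), (1 : Fin 2)) ((1 : Fin 2), (1 : Fin 2))).re))
              (Real.sqrt ((V ((0 : Fin 2), (1 : Fin 2)) ((0 : Fin 2), (1 : Fin 2))).re *
                  (V ((1 : Fin 2), (0 : Fin 2)) ((1 : Fin 2), (0 : Fin 2))).re))) := by
  constructor
  · rintro ⟨hpsd, hppt, hinv⟩
    have hent : ∀ p q : Fin 2 × Fin 2,
        ((if p.2 = p.1 then 1 else if p.1 = 0 then Complex.I else -Complex.I) *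
          (starRingEnd ℂ) (if q.2 = q.1 then 1 else if q.1 = 0 then Complex.I else -Complex.I))
          * V p q = V p q := by
      intro p q
      have h := congrFun (congrFun (hinv (Real.pi / 2)) p) q
      rw [Utheta, conj_diag_apply, hE, hE] at h
      linear_combination h
    refine ⟨?_, fun p => diag_psd_nonneg hpsd p, ?_⟩
    · intro p q hne h1 h2
      fin_cases p <;> fin_cases q <;>
        first
          | exact absurd (by decide) hne
          | exact absurd (by decide) h1
          | exact absurd (by decide) h2
          | exact elim_phase (hent _ _)
              (by norm_num [Complex.ext_iff, Complex.conj_I])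
    · have hb1 : Complex.normSq (V ((0 : Fin 2), (0 : Fin 2)) ((1 : Fin 2), (1 : Fin 2)))
          ≤ (V ((0 : Fin 2), (0 : Fin 2)) ((0 : Fin 2), (0 : Fin 2))).re *
            (V ((1 : Fin 2), (1 : Fin 2)) ((1 : Fin 2), (1 : Fin 2))).re :=
        offdiag_sq_le hpsd _ _ (by decide)
      have hb2 : Complex.normSq (V ((0 : Fin 2), (0 : Fin 2)) ((1 : Fin 2), (1 : Fin 2)))
          ≤ (V ((0 : Fin 2), (1 : Fin 2)) ((0 : Fin 2), (1 : Fin 2))).re *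
            (V ((1 : Fin 2), (0 : Fin 2)) ((1 : Fin 2), (0 : Fin 2))).re := by
        have h := offdiag_sq_le hppt ((0 : Fin 2), (1 : Fin 2)) ((1 : Fin 2), (0 : Fin 2))
          (by decide)
        simpa [ptransposeB] using h
      refine le_min (Real.le_sqrt_of_sq_le ?_) (Real.le_sqrt_of_sq_le ?_) <;>
        rw [Complex.sq_norm]
      · exact hb1
      · exact hb2
  · rintro ⟨hzero, hdiag, habs⟩
    set α := (V ((0 : Fin 2), (0 : Fin 2)) ((0 : Fin 2), (0 : Fin 2))).re with hα_def
    set β := (V ((1 : Fin 2), (1 : Fin 2)) ((1 : Fin 2), (1 : Fin 2))).re with hβ_def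
    set γ := (V ((0 : Fin 2), (1 : Fin 2)) ((0 : Fin 2), (1 : Fin 2))).re with hγ_def
    set δ := (V ((1 : Fin 2), (0 : Fin 2)) ((1 : Fin 2), (0 : Fin 2))).re with hδ_def
    set v := V ((0 : Fin 2), (0 : Fin 2)) ((1 : Fin 2), (1 : Fin 2)) with hv_def
    have hα : 0 ≤ α := (Complex.nonneg_iff.mp (hdiag _)).1
    have hβ : 0 ≤ β := (Complex.nonneg_iff.mp (hdiag _)).1
    have hγ : 0 ≤ γ := (Complex.nonneg_iff.mp (hdiag _)).1
    have hδ : 0 ≤ δ := (Complex.nonneg_iff.mp (hdiag _)).1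
    have hdr : ∀ p : Fin 2 × Fin 2, V p p = (((V p p).re : ℝ) : ℂ) := by
      intro p
      have := (Complex.nonneg_iff.mp (hdiag p)).2
      exact (Complex.ext (by simp) (by simp [← this])).symm
    have hcross : V ((1 : Fin 2), (1 : Fin 2)) ((0 : Fin 2), (0 : Fin 2))
        = (starRingEnd ℂ) v := by
      rw [← hherm.apply _ _]; rfl
    have hv1 : Complex.normSq v ≤ α * β := by
      have h := le_trans habs (min_le_left _ _)
      rw [← Complex.sq_norm]
      exact (Real.le_sqrt (norm_nonneg _) (mul_nonneg hα hβ)).mp h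
    have hv2 : Complex.normSq v ≤ γ * δ := by
      have h := le_trans habs (min_le_right _ _)
      rw [← Complex.sq_norm]
      exact (Real.le_sqrt (norm_nonneg _) (mul_nonneg hγ hδ)).mp h
    have z1 : V ((0 : Fin 2), (0 : Fin 2)) ((0 : Fin 2), (1 : Fin 2)) = 0 :=
      hzero _ _ (by decide) (by decide) (by decide)
    have z2 : V ((0 : Fin 2), (0 : Fin 2)) ((1 : Fin 2), (0 : Fin 2)) = 0 :=
      hzero _ _ (by decide) (by decide) (by decide)
    have z3 : V ((0 : Fin 2), (1 : Fin 2)) ((0 : Fin 2), (0 : Fin 2)) = 0 :=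
      hzero _ _ (by decide) (by decide) (by decide)
    have z4 : V ((0 : Fin 2), (1 : Fin 2)) ((1 : Fin 2), (0 : Fin 2)) = 0 :=
      hzero _ _ (by decide) (by decide) (by decide)
    have z5 : V ((0 : Fin 2), (1 : Fin 2)) ((1 : Fin 2), (1 : Fin 2)) = 0 :=
      hzero _ _ (by decide) (by decide) (by decide)
    have z6 : V ((1 : Fin 2), (0 : Fin 2)) ((0 : Fin 2), (0 : Fin 2)) = 0 :=
      hzero _ _ (by decide) (by decide) (by decide)
    have z7 : V ((1 : Fin 2), (0 : Fin 2)) ((0 : Fin 2), (1 : Fin 2)) = 0 :=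
      hzero _ _ (by decide) (by decide) (by decide)
    have z8 : V ((1 : Fin 2), (0 : Fin 2)) ((1 : Fin 2), (1 : Fin 2)) = 0 :=
      hzero _ _ (by decide) (by decide) (by decide)
    have z9 : V ((1 : Fin 2), (1 : Fin 2)) ((0 : Fin 2), (1 : Fin 2)) = 0 :=
      hzero _ _ (by decide) (by decide) (by decide)
    have z10 : V ((1 : Fin 2), (1 : Fin 2)) ((1 : Fin 2), (0 : Fin 2)) = 0 :=
      hzero _ _ (by decide) (by decide) (by decide)
    have hd00 : V ((0 : Fin 2), (0 : Fin 2)) ((0 : Fin 2), (0 : Fin 2)) = ((α : ℝ) : ℂ) := by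
      rw [hdr ((0 : Fin 2), (0 : Fin 2))]
    have hd01 : V ((0 : Fin 2), (1 : Fin 2)) ((0 : Fin 2), (1 : Fin 2)) = ((γ : ℝ) : ℂ) := by
      rw [hdr ((0 : Fin 2), (1 : Fin 2))]
    have hd10 : V ((1 : Fin 2), (0 : Fin 2)) ((1 : Fin 2), (0 : Fin 2)) = ((δ : ℝ) : ℂ) := by
      rw [hdr ((1 : Fin 2), (0 : Fin 2))]
    have hd11 : V ((1 : Fin 2), (1 : Fin 2)) ((1 : Fin 2), (1 : Fin 2)) = ((β : ℝ) : ℂ) := by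
      rw [hdr ((1 : Fin 2), (1 : Fin 2))]
    refine ⟨Matrix.PosSemidef.of_dotProduct_mulVec_nonneg hherm fun x => ?_,
      Matrix.PosSemidef.of_dotProduct_mulVec_nonneg ?_ fun x => ?_, ?_⟩
    · have heq : star x ⬝ᵥ V *ᵥ x
          = (starRingEnd ℂ) (x ((0 : Fin 2), (0 : Fin 2))) *
              ((α : ℂ) * x ((0 : Fin 2), (0 : Fin 2)) + v * x ((1 : Fin 2), (1 : Fin 2)))
            + (starRingEnd ℂ) (x ((0 : Fin 2), (1 : Fin 2))) *
              ((γ : ℂ) * x ((0 : Fin 2), (1 : Fin 2)))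
            + (starRingEnd ℂ) (x ((1 : Fin 2), (0 : Fin 2))) *
              ((δ : ℂ) * x ((1 : Fin 2), (0 : Fin 2)))
            + (starRingEnd ℂ) (x ((1 : Fin 2), (1 : Fin 2))) *
              ((starRingEnd ℂ) v * x ((0 : Fin 2), (0 : Fin 2))
                + (β : ℂ) * x ((1 : Fin 2), (1 : Fin 2))) := by
        simp only [dotProduct, mulVec, Fintype.sum_prod_type, Fin.sum_univ_two,
          Pi.star_apply, Complex.star_def]
        rw [z1, z2, z3, z4, z5, z6, z7, z8, z9, z10, hcross, hd00, hd01, hd10, hd11, ← hv_def]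
        ring
      rw [heq]
      exact quad_final α β γ δ v hα hβ hγ hδ hv1 _ _ _ _
    · ext p q
      simp only [ptransposeB, Matrix.conjTranspose_apply, Matrix.of_apply]
      exact hherm.apply _ _
    · have heq : star x ⬝ᵥ ptransposeB V *ᵥ x
          = (starRingEnd ℂ) (x ((0 : Fin 2), (1 : Fin 2))) *
              ((γ : ℂ) * x ((0 : Fin 2), (1 : Fin 2)) + v * x ((1 : Fin 2), (0 : Fin 2)))
            + (starRingEnd ℂ) (x ((0 : Fin 2), (0 : Fin 2))) *
              ((α : ℂ) * x ((0 : Fin 2), (0 : Fin 2)))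
            + (starRingEnd ℂ) (x ((1 : Fin 2), (1 : Fin 2))) *
              ((β : ℂ) * x ((1 : Fin 2), (1 : Fin 2)))
            + (starRingEnd ℂ) (x ((1 : Fin 2), (0 : Fin 2))) *
              ((starRingEnd ℂ) v * x ((0 : Fin 2), (1 : Fin 2))
                + (δ : ℂ) * x ((1 : Fin 2), (0 : Fin 2))) := by
        simp only [ptransposeB, Matrix.of_apply, dotProduct, mulVec, Fintype.sum_prod_type,
          Fin.sum_univ_two, Pi.star_apply, Complex.star_def]
        rw [z1, z2, z3, z4, z5, z6, z7, z8, z9, z10, hcross, hd00, hd01, hd10, hd11, ← hv_def]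
        ring
      rw [heq]
      exact quad_final γ δ α β v hγ hδ hα hβ hv2 _ _ _ _
    · intro θ
      have hmain : ∀ p q : Fin 2 × Fin 2,
          (((p.2 : ℕ) : ℂ) - ((p.1 : ℕ) : ℂ)) = (((q.2 : ℕ) : ℂ) - ((q.1 : ℕ) : ℂ))
            ∨ V p q = 0 := by
        intro p q
        by_cases h : ((p.2 : ℕ) : ℤ) - ((p.1 : ℕ) : ℤ) = ((q.2 : ℕ) : ℤ) - ((q.1 : ℕ) : ℤ)
        · left; exact_mod_cast h
        · right
          refine hzero p q ?_ ?_ ?_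
          · rintro rfl; exact h rfl
          · rintro ⟨rfl, rfl⟩; exact h (by decide)
          · rintro ⟨rfl, rfl⟩; exact h (by decide)
      apply Matrix.ext
      intro p q
      rw [Utheta, conj_diag_apply]
      rcases hmain p q with hd | h0
      · rw [← Complex.exp_conj, conj_phase]
        have h1 : Complex.exp (Complex.I * (θ : ℂ) * (((p.2 : ℕ) : ℂ) - ((p.1 : ℕ) : ℂ))) *
            Complex.exp (-(Complex.I * (θ : ℂ) * (((q.2 : ℕ) : ℂ) - ((q.1 : ℕ) : ℂ)))) = 1 := by
          rw [← Complex.exp_add,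
            show Complex.I * (θ : ℂ) * (((p.2 : ℕ) : ℂ) - ((p.1 : ℕ) : ℂ)) +
              -(Complex.I * (θ : ℂ) * (((q.2 : ℕ) : ℂ) - ((q.1 : ℕ) : ℂ))) = 0 by rw [hd]; ring,
            Complex.exp_zero]
        linear_combination V p q * h1
      · rw [h0]; ring
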